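/- Let u be a nonempty word over alphabet A, and write u = u₁ aⁿ where a is the last letter of u and n is maximal (i.e. u₁ does not end in a). Then the coefficient of u₁ ⊗ aⁿ in the unshuffle coproduct c(u) equals 1. -/

import Mathlib

open TensorProduct

/-- The unshuffle coproduct on the monoid algebra of the free monoid (= `K⟨A⟩`):
the unique algebra morphism (for the concatenation product) sending each letter `a`
to `a ⊗ 1 + 1 ⊗ a`. -/
noncomputable def unshuffle (K A : Type*) [CommSemiring K] :
    MonoidAlgebra K (FreeMonoid A) →ₐ[K]
      MonoidAlgebra K (FreeMonoid A) ⊗[K] MonoidAlgebra K (FreeMonoid A) :=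
  MonoidAlgebra.lift K _ (FreeMonoid A)
    (FreeMonoid.lift fun a =>
      (MonoidAlgebra.of K (FreeMonoid A) (FreeMonoid.of a)) ⊗ₜ[K] 1
        + 1 ⊗ₜ[K] (MonoidAlgebra.of K (FreeMonoid A) (FreeMonoid.of a)))

/-- The word `l` viewed as an element of `K⟨A⟩`. -/
noncomputable def wd {K : Type*} {A : Type*} [CommSemiring K] (l : List A) :
    MonoidAlgebra K (FreeMonoid A) :=
  MonoidAlgebra.of K (FreeMonoid A) (FreeMonoid.ofList l)

/-- `P` is primitive for the unshuffle coproduct: `c(P) = P ⊗ 1 + 1 ⊗ P`. -/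
def IsPrimitive {K A : Type*} [CommSemiring K] (P : MonoidAlgebra K (FreeMonoid A)) : Prop :=
  unshuffle K A P = P ⊗ₜ[K] 1 + 1 ⊗ₜ[K] P

/-- Coefficient-extraction on a basis tensor `u ⊗ v` of `K⟨A⟩ ⊗ K⟨A⟩`. -/
noncomputable def coeffT {K A : Type*} [CommSemiring K] (u v : FreeMonoid A) :
    MonoidAlgebra K (FreeMonoid A) ⊗[K] MonoidAlgebra K (FreeMonoid A) →ₗ[K] K :=
  (TensorProduct.lid K K).toLinearMap ∘ₗ
    TensorProduct.map (Finsupp.lapply u ∘ₗ (MonoidAlgebra.coeffLinearEquiv K).toLinearMap)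
      (Finsupp.lapply v ∘ₗ (MonoidAlgebra.coeffLinearEquiv K).toLinearMap)

section Aux

variable {K A : Type*} [CommSemiring K]

lemma coeffT_tmul (u v : FreeMonoid A) (f g : MonoidAlgebra K (FreeMonoid A)) :
    coeffT u v (f ⊗ₜ[K] g) = f.coeff u * g.coeff v := by
  simp [coeffT, Finsupp.lapply, smul_eq_mul]

lemma unshuffle_wd_cons (x : A) (l : List A) :
    unshuffle K A (wd (x :: l)) =
      ((wd [x] : MonoidAlgebra K (FreeMonoid A)) ⊗ₜ[K] 1 + 1 ⊗ₜ[K] wd [x])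
        * unshuffle K A (wd l) := by
  have h1 : (wd (x :: l) : MonoidAlgebra K (FreeMonoid A)) = wd [x] * wd l := by
    rw [wd, wd, wd, FreeMonoid.ofList_cons, map_mul, FreeMonoid.ofList_singleton]
  rw [h1, map_mul]
  congr 1
  rw [wd, FreeMonoid.ofList_singleton]
  rw [unshuffle, MonoidAlgebra.lift_of]
  simp [FreeMonoid.lift_eval_of]

lemma wd_single (x : A) : (wd [x] : MonoidAlgebra K (FreeMonoid A))
    = MonoidAlgebra.single (FreeMonoid.of x) 1 := by
  rw [wd, FreeMonoid.ofList_singleton, MonoidAlgebra.of_apply]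

lemma single_mul_apply_cons (x : A) (u : List A) (f : MonoidAlgebra K (FreeMonoid A)) :
    ((wd [x] : MonoidAlgebra K (FreeMonoid A)) * f).coeff (FreeMonoid.ofList (x :: u))
      = f.coeff (FreeMonoid.ofList u) := by
  rw [wd_single]
  rw [MonoidAlgebra.coeff_single_mul_eq_mul_coeff (m₂ := FreeMonoid.ofList u)
    (x := f) (H := fun a _ => by
      rw [FreeMonoid.ofList_cons]; exact mul_right_inj _), one_mul]

lemma single_mul_apply_ne (x : A) (u : List A) (h : u.head? ≠ some x)
    (f : MonoidAlgebra K (FreeMonoid A)) :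
    ((wd [x] : MonoidAlgebra K (FreeMonoid A)) * f).coeff (FreeMonoid.ofList u) = 0 := by
  rw [wd_single]
  apply MonoidAlgebra.coeff_single_mul_of_forall_mul_ne
  intro d hd
  have : u = x :: FreeMonoid.toList d := by
    have := congrArg FreeMonoid.toList hd.symm
    simpa [FreeMonoid.toList_of_mul] using this
  rw [this] at h
  simp at h

lemma coeffT_left_mul (x : A) (u v : List A)
    (T : MonoidAlgebra K (FreeMonoid A) ⊗[K] MonoidAlgebra K (FreeMonoid A)) :
    coeffT (FreeMonoid.ofList (x :: u)) (FreeMonoid.ofList v)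
      (((wd [x] : MonoidAlgebra K (FreeMonoid A)) ⊗ₜ[K] 1) * T)
      = coeffT (FreeMonoid.ofList u) (FreeMonoid.ofList v) T := by
  induction T using TensorProduct.induction_on with
  | zero => simp
  | tmul f g =>
      rw [Algebra.TensorProduct.tmul_mul_tmul, one_mul, coeffT_tmul, coeffT_tmul,
        single_mul_apply_cons]
  | add s t hs ht => rw [mul_add, map_add, map_add, hs, ht]

lemma coeffT_left_mul_ne (x : A) (u v : List A) (h : u.head? ≠ some x)
    (T : MonoidAlgebra K (FreeMonoid A) ⊗[K] MonoidAlgebra K (FreeMonoid A)) :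
    coeffT (FreeMonoid.ofList u) (FreeMonoid.ofList v)
      (((wd [x] : MonoidAlgebra K (FreeMonoid A)) ⊗ₜ[K] 1) * T) = 0 := by
  induction T using TensorProduct.induction_on with
  | zero => simp
  | tmul f g =>
      rw [Algebra.TensorProduct.tmul_mul_tmul, one_mul, coeffT_tmul,
        single_mul_apply_ne x u h, zero_mul]
  | add s t hs ht => rw [mul_add, map_add, hs, ht, add_zero]

lemma coeffT_right_mul (x : A) (u v : List A)
    (T : MonoidAlgebra K (FreeMonoid A) ⊗[K] MonoidAlgebra K (FreeMonoid A)) :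
    coeffT (FreeMonoid.ofList u) (FreeMonoid.ofList (x :: v))
      ((1 ⊗ₜ[K] (wd [x] : MonoidAlgebra K (FreeMonoid A))) * T)
      = coeffT (FreeMonoid.ofList u) (FreeMonoid.ofList v) T := by
  induction T using TensorProduct.induction_on with
  | zero => simp
  | tmul f g =>
      rw [Algebra.TensorProduct.tmul_mul_tmul, one_mul, coeffT_tmul, coeffT_tmul,
        single_mul_apply_cons]
  | add s t hs ht => rw [mul_add, map_add, map_add, hs, ht]

lemma coeffT_right_mul_ne (x : A) (u v : List A) (h : v.head? ≠ some x)
    (T : MonoidAlgebra K (FreeMonoid A) ⊗[K] MonoidAlgebra K (FreeMonoid A)) :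
    coeffT (FreeMonoid.ofList u) (FreeMonoid.ofList v)
      ((1 ⊗ₜ[K] (wd [x] : MonoidAlgebra K (FreeMonoid A))) * T) = 0 := by
  induction T using TensorProduct.induction_on with
  | zero => simp
  | tmul f g =>
      rw [Algebra.TensorProduct.tmul_mul_tmul, one_mul, coeffT_tmul,
        single_mul_apply_ne x v h, mul_zero]
  | add s t hs ht => rw [mul_add, map_add, hs, ht, add_zero]

lemma repl_append_cons (a : A) (k : ℕ) (u : List A) :
    List.replicate k a ++ (a :: u) = List.replicate (k+1) a ++ u := by
  rw [List.replicate_succ', List.append_assoc, List.singleton_append]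

lemma getLast?_cons_ne {x : A} {u : List A} (h : u ≠ []) :
    (x :: u).getLast? = u.getLast? := by
  cases u with
  | nil => exact absurd rfl h
  | cons y u' => exact List.getLast?_cons_cons

lemma base_case (a : A) : ∀ n : ℕ,
    coeffT (K := K) (FreeMonoid.ofList ([] : List A))
      (FreeMonoid.ofList (List.replicate n a))
      (unshuffle K A (wd (List.replicate n a))) = 1 := by
  intro n
  induction n with
  | zero =>
      rw [List.replicate_zero, wd, FreeMonoid.ofList_nil, map_one, map_one,
        Algebra.TensorProduct.one_def, coeffT_tmul]
      simp [MonoidAlgebra.one_def]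
  | succ n ih =>
      rw [List.replicate_succ, unshuffle_wd_cons, add_mul, map_add,
        coeffT_left_mul_ne a [] _ (by simp), coeffT_right_mul, zero_add, ih]

lemma Zlem (a : A) (u : List A) : u ≠ [] → u.getLast? ≠ some a → ∀ k m : ℕ,
    coeffT (K := K) (FreeMonoid.ofList (List.replicate (k+1) a ++ u))
      (FreeMonoid.ofList (List.replicate m a))
      (unshuffle K A (wd (u ++ List.replicate (k+1+m) a))) = 0 := by
  induction u with
  | nil => intro h; cases h rfl
  | cons x u' ih =>
      intro _ hlast k m
      rw [List.cons_append, unshuffle_wd_cons, add_mul, map_add]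
      by_cases hxa : x = a
      · subst hxa
        have hu' : u' ≠ [] := by
          rintro rfl; simp at hlast
        have hlast' : u'.getLast? ≠ some x := by
          rwa [getLast?_cons_ne hu'] at hlast
        have t1 : coeffT (K := K) (FreeMonoid.ofList (List.replicate (k+1) x ++ (x :: u')))
            (FreeMonoid.ofList (List.replicate m x))
            (((wd [x] : MonoidAlgebra K (FreeMonoid A)) ⊗ₜ[K] 1)
              * unshuffle K A (wd (u' ++ List.replicate (k+1+m) x))) = 0 := by
          have h1 : List.replicate (k+1) x ++ (x :: u')
              = x :: (List.replicate (k+1) x ++ u') :=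
            calc List.replicate (k+1) x ++ (x :: u')
                = x :: (List.replicate k x ++ (x :: u')) := by
                  rw [List.replicate_succ, List.cons_append]
              _ = x :: (List.replicate (k+1) x ++ u') := by rw [repl_append_cons]
          rw [h1, coeffT_left_mul]
          exact ih hu' hlast' k m
        have t2 : coeffT (K := K) (FreeMonoid.ofList (List.replicate (k+1) x ++ (x :: u')))
            (FreeMonoid.ofList (List.replicate m x))
            ((1 ⊗ₜ[K] (wd [x] : MonoidAlgebra K (FreeMonoid A)))
              * unshuffle K A (wd (u' ++ List.replicate (k+1+m) x))) = 0 := by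
          cases m with
          | zero =>
              rw [List.replicate_zero]
              exact coeffT_right_mul_ne x _ [] (by simp) _
          | succ m' =>
              have e1 : List.replicate (m'+1) x = x :: List.replicate m' x :=
                List.replicate_succ
              rw [e1, coeffT_right_mul, repl_append_cons x (k+1) u']
              have e3 : k + 1 + (m' + 1) = (k + 1) + 1 + m' := by omega
              rw [e3]
              exact ih hu' hlast' (k+1) m'
        rw [t1, t2, add_zero]
      · have t1 : (List.replicate (k+1) a ++ (x :: u')).head? ≠ some x := by
          rw [List.replicate_succ, List.cons_append]
          simp [Ne.symm hxa]
        have t2 : (List.replicate m a).head? ≠ some x := by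
          cases m with
          | zero => simp
          | succ m' => rw [List.replicate_succ]; simp [Ne.symm hxa]
        rw [coeffT_left_mul_ne x _ _ t1, coeffT_right_mul_ne x _ _ t2, add_zero]

lemma Mlem (a : A) (u₁ : List A) : u₁.getLast? ≠ some a → ∀ n : ℕ,
    coeffT (K := K) (FreeMonoid.ofList u₁) (FreeMonoid.ofList (List.replicate n a))
      (unshuffle K A (wd (u₁ ++ List.replicate n a))) = 1 := by
  induction u₁ with
  | nil => intro _ n; rw [List.nil_append]; exact base_case a n
  | cons x u₁' ih =>
      intro hlast n
      rw [List.cons_append, unshuffle_wd_cons, add_mul, map_add]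
      have hlast' : u₁'.getLast? ≠ some a := by
        rcases u₁' with _ | ⟨y, u''⟩
        · simp
        · rwa [getLast?_cons_ne (by simp)] at hlast
      have t1 : coeffT (K := K) (FreeMonoid.ofList (x :: u₁'))
          (FreeMonoid.ofList (List.replicate n a))
          (((wd [x] : MonoidAlgebra K (FreeMonoid A)) ⊗ₜ[K] 1)
            * unshuffle K A (wd (u₁' ++ List.replicate n a))) = 1 := by
        rw [coeffT_left_mul]
        exact ih hlast' n
      have t2 : coeffT (K := K) (FreeMonoid.ofList (x :: u₁'))
          (FreeMonoid.ofList (List.replicate n a))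
          ((1 ⊗ₜ[K] (wd [x] : MonoidAlgebra K (FreeMonoid A)))
            * unshuffle K A (wd (u₁' ++ List.replicate n a))) = 0 := by
        cases n with
        | zero =>
            rw [List.replicate_zero]
            exact coeffT_right_mul_ne x _ [] (by simp) _
        | succ n' =>
            by_cases hxa : x = a
            · subst hxa
              have hu' : u₁' ≠ [] := by rintro rfl; simp at hlast
              have e1 : List.replicate (n'+1) x = x :: List.replicate n' x :=
                List.replicate_succ
              rw [e1, coeffT_right_mul]
              have h2 : (x :: u₁') = List.replicate (0+1) x ++ u₁' := by simp
              have h3 : n' + 1 = 0 + 1 + n' := by omega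
              rw [h2, ← e1, h3]
              exact Zlem x u₁' hu' hlast' 0 n'
            · exact coeffT_right_mul_ne x _ _
                (by rw [List.replicate_succ]; simp [Ne.symm hxa]) _
      rw [t1, t2, add_zero]

end Aux

/-- if `u = u₁ aⁿ` with `n ≥ 1` maximal (i.e. `u₁` does not end in `a`),
then the coefficient of `u₁ ⊗ aⁿ` in `c(u)` is `1`. -/
theorem coeff_of_last_letter_block {K A : Type*} [CommSemiring K]
    (u₁ : List A) (a : A) (n : ℕ) (hn : 0 < n) (hlast : u₁.getLast? ≠ some a) :
    coeffT (K := K) (FreeMonoid.ofList u₁) (FreeMonoid.ofList (List.replicate n a))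
      (unshuffle K A (wd (u₁ ++ List.replicate n a))) = 1 :=
  Mlem a u₁ hlast n
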